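/- Let a, b, k, x, y be integers with a > 1, b > 1, k ≥ 0, 1 ≤ x ≤ a − 1, 1 ≤ y ≤ b − 1, and a·y + b·x = 1 + a·b. Then the integer z = k·(a − x) + y satisfies 1 ≤ z ≤ k·a + b − 1 and a·z ≡ 1 (mod k·a + b); that is, z is the modular inverse of a modulo k·a + b. -/
import Mathlib

theorem inverse_mod_ka_add_b_in_range
    (a b k x y : ℤ)
    (ha : 1 < a) (hb : 1 < b) (hk : 0 ≤ k)
    (hx : 1 ≤ x ∧ x ≤ a - 1) (hy : 1 ≤ y ∧ y ≤ b - 1)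
    (h : a * y + b * x = 1 + a * b) :
    1 ≤ k * (a - x) + y ∧ k * (a - x) + y ≤ k * a + b - 1 ∧
    a * (k * (a - x) + y) ≡ 1 [ZMOD k * a + b] := by
  obtain ⟨hx1, hx2⟩ := hx
  obtain ⟨hy1, hy2⟩ := hy
  refine ⟨by nlinarith, by nlinarith, ?_⟩
  have hdvd : (k * a + b) ∣ (1 - a * (k * (a - x) + y)) := ⟨-(a - x), by ring_nf; nlinarith⟩
  exact (Int.modEq_iff_dvd.mpr hdvd)
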